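/- arXiv:math/0304152 — 5 statements merged into one kernel-verified Lean document; each statement's English description precedes it below -/
import Mathlib

section
/- Let $I \subseteq (0,1]$ and let $I_+$ denote the set of all finite sums of elements of $I$ that are less than one. Define $D(I) = \{ a \leq 1 : a = \frac{m-1}{m} + \frac{f}{m} \text{ for some } m \in \mathbb{N}_{\geq 1}, f \in I_+ \}$. Then $D(I)_+ = D(I)$, i.e., every finite sum of elements of $D(I)$ that is less than one is itself an element of $D(I)$. -/
/-- `Iplus I` : the set of all finite (nonempty) sums of elements of `I`
that are less than one. -/
def Iplus (I : Set ℝ) : Set ℝ :=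
  {x | ∃ l : List ℝ, l ≠ [] ∧ (∀ y ∈ l, y ∈ I) ∧ l.sum = x ∧ x < 1}

/-- `DD I` : the set of `a ≤ 1` of the form `(m-1)/m + f/m` with `m` a
positive integer and `f ∈ Iplus I`. -/
def DD (I : Set ℝ) : Set ℝ :=
  {a | a ≤ 1 ∧ ∃ m : ℕ, 0 < m ∧ ∃ f ∈ Iplus I, a = ((m : ℝ) - 1) / m + f / m}

/-- A set of reals satisfies DCC if it contains no infinite strictly
decreasing sequence. -/
def DCC (S : Set ℝ) : Prop := ¬ ∃ f : ℕ → ℝ, (∀ n, f n ∈ S) ∧ StrictAnti f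

/-- A set of reals satisfies ACC if it contains no infinite strictly
increasing sequence. -/
def ACC (S : Set ℝ) : Prop := ¬ ∃ f : ℕ → ℝ, (∀ n, f n ∈ S) ∧ StrictMono f

lemma Iplus_pos {I : Set ℝ} (hI : I ⊆ Set.Ioc 0 1) {x : ℝ} (hx : x ∈ Iplus I) : 0 < x := by
  obtain ⟨l, hne, hmem, hsum, _⟩ := hx
  subst hsum
  exact List.sum_pos l (fun a ha => (hI (hmem a ha)).1) hne

lemma Iplus_lt_one {I : Set ℝ} {x : ℝ} (hx : x ∈ Iplus I) : x < 1 := by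
  obtain ⟨l, _, _, _, h⟩ := hx; exact h

lemma DD_bounds {I : Set ℝ} (hI : I ⊆ Set.Ioc 0 1) {a : ℝ} (ha : a ∈ DD I) :
    0 < a ∧ a < 1 := by
  obtain ⟨-, m, hm, f, hf, rfl⟩ := ha
  have hm1 : (1:ℝ) ≤ m := by exact_mod_cast hm
  have hf0 := Iplus_pos hI hf
  have hf1 := Iplus_lt_one hf
  have hm0 : (0:ℝ) < m := by linarith
  constructor
  · have h1 : (0:ℝ) ≤ ((m:ℝ) - 1) / m := div_nonneg (by linarith) (by linarith)
    have h2 : (0:ℝ) < f / m := div_pos hf0 hm0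
    linarith
  · rw [← add_div, div_lt_one hm0]
    linarith

lemma Iplus_add_nsmul {I : Set ℝ} {f g : ℝ} (hf : f ∈ Iplus I) (hg : g ∈ Iplus I)
    (m : ℕ) (h : f + m * g < 1) : f + m * g ∈ Iplus I := by
  obtain ⟨lf, hlf, hmf, hsf, _⟩ := hf
  obtain ⟨lg, hlg, hmg, hsg, _⟩ := hg
  refine ⟨lf ++ (List.replicate m lg).flatten, by simp [hlf], ?_, ?_, h⟩
  · intro y hy
    rcases List.mem_append.mp hy with h1 | h1
    · exact hmf y h1
    · obtain ⟨l', hl', hyl'⟩ := List.mem_flatten.mp h1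
      rw [(List.mem_replicate.mp hl').2] at hyl'
      exact hmg y hyl'
  · have hjoin : (List.replicate m lg).flatten.sum = (m : ℝ) * lg.sum := by
      induction m with
      | zero => simp
      | succ n ihn => simp [List.replicate_succ, ihn]; ring
    rw [List.sum_append, hjoin, hsf, hsg]

lemma DD_add_Iplus {I : Set ℝ} (hI : I ⊆ Set.Ioc 0 1) {a g : ℝ}
    (ha : a ∈ DD I) (hg : g ∈ Iplus I) (h : a + g < 1) : a + g ∈ DD I := by
  obtain ⟨-, m, hm, f, hf, rfl⟩ := ha
  have hm1 : (1:ℝ) ≤ m := by exact_mod_cast hm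
  have hm0 : (0:ℝ) < m := by linarith
  have hfg : f + m * g < 1 := by
    rw [← add_div] at h
    have h2 : ((m:ℝ) - 1 + f) / m < 1 - g := by linarith
    have h3 := (div_lt_iff₀ hm0).mp h2
    nlinarith
  refine ⟨le_of_lt h, m, hm, f + m * g, Iplus_add_nsmul hf hg m hfg, ?_⟩
  field_simp
  ring

lemma DD_add {I : Set ℝ} (hI : I ⊆ Set.Ioc 0 1) {a b : ℝ}
    (ha : a ∈ DD I) (hb : b ∈ DD I) (h : a + b < 1) : a + b ∈ DD I := by
  have ha' := ha
  have hb' := hb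
  obtain ⟨-, m, hm, f, hf, haeq⟩ := ha'
  obtain ⟨-, n, hn, g, hg, hbeq⟩ := hb'
  have half : ∀ k : ℕ, 2 ≤ k → ∀ u : ℝ, u ∈ Iplus I → (1:ℝ)/2 ≤ ((k:ℝ) - 1)/k + u/k := by
    intro k hk u hu
    have hk2 : (2:ℝ) ≤ k := by exact_mod_cast hk
    have hk0 : (0:ℝ) < k := by linarith
    have h1 : (1:ℝ)/2 ≤ ((k:ℝ) - 1)/k := by
      rw [div_le_div_iff₀ (by norm_num) hk0]; linarith
    have h2 : 0 < u / k := div_pos (Iplus_pos hI hu) hk0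
    linarith
  have key : m = 1 ∨ n = 1 := by
    by_contra hc
    push_neg at hc
    have hm2 : 2 ≤ m := by omega
    have hn2 : 2 ≤ n := by omega
    have h1 := half m hm2 f hf
    have h2 := half n hn2 g hg
    rw [← haeq] at h1
    rw [← hbeq] at h2
    linarith
  rcases key with rfl | rfl
  · have haf : a = f := by rw [haeq]; norm_num
    subst haf
    rw [add_comm]
    exact DD_add_Iplus hI hb hf (by linarith)
  · have hbg : b = g := by rw [hbeq]; norm_num
    subst hbg
    exact DD_add_Iplus hI ha hg h

lemma list_sum_DD {I : Set ℝ} (hI : I ⊆ Set.Ioc 0 1) :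
    ∀ l : List ℝ, l ≠ [] → (∀ y ∈ l, y ∈ DD I) → l.sum < 1 → l.sum ∈ DD I := by
  intro l
  induction l with
  | nil => intro h; exact absurd rfl h
  | cons a t ih =>
    intro _ hmem hlt
    rcases eq_or_ne t [] with rfl | ht
    · simpa using hmem a (by simp)
    · have hat : ∀ y ∈ t, y ∈ DD I := fun y hy => hmem y (List.mem_cons_of_mem _ hy)
      have haD : a ∈ DD I := hmem a List.mem_cons_self
      have ha0 := (DD_bounds hI haD).1
      rw [List.sum_cons] at hlt ⊢
      have hts : t.sum < 1 := by linarith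
      exact DD_add hI haD (ih ht hat hts) hlt

/-- Lemma 4.4(1): `D(I)_+ = D(I)`. -/
theorem Iplus_DD_eq (I : Set ℝ) (hI : I ⊆ Set.Ioc 0 1) :
    Iplus (DD I) = DD I := by
  ext x
  constructor
  · rintro ⟨l, hne, hmem, rfl, hlt⟩
    exact list_sum_DD hI l hne hmem hlt
  · intro hx
    exact ⟨[x], by simp, by simpa, by simp, (DD_bounds hI hx).2⟩
end

section
/- Let $I \subseteq (0,1]$ with $1 \in I$. Then $I$ satisfies the descending chain condition (every non-increasing sequence in $I$ is eventually constant) if and only if $D(I)$ satisfies the descending chain condition. -/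
open Set Pointwise

lemma dcc_iff_isWF (S : Set ℝ) : DCC S ↔ S.IsWF := by
  constructor
  · intro h
    rw [Set.isWF_iff_no_descending_seq]
    intro f hf hm
    exact h ⟨f, fun n => hm n, hf⟩
  · rintro h ⟨f, hm, hf⟩
    exact (Set.isWF_iff_no_descending_seq.mp h) f hf fun n => hm n

lemma pigeon_subseq {N : ℕ} (c : ℕ → ℕ) (hc : ∀ n, c n < N) :
    ∃ k, ∃ φ : ℕ → ℕ, StrictMono φ ∧ ∀ n, c (φ n) = k := by
  have : Finite (Fin N) := inferInstance
  obtain ⟨y, hy⟩ := Finite.exists_infinite_fiber (fun n => (⟨c n, hc n⟩ : Fin N))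
  have hinf : {n : ℕ | c n = (y : ℕ)}.Infinite := by
    refine (Set.infinite_coe_iff.mp hy).mono fun n hn => ?_
    simpa [Fin.ext_iff] using hn
  exact ⟨(y : ℕ), Nat.nth (fun n => c n = (y : ℕ)), Nat.nth_strictMono hinf,
    fun n => Nat.nth_mem_of_infinite hinf n⟩

/-- k-fold sumsets of I -/
def Tk (I : Set ℝ) : ℕ → Set ℝ
  | 0 => {0}
  | k + 1 => I + Tk I k

lemma Tk_isWF {I : Set ℝ} (hI : I.IsWF) : ∀ k, (Tk I k).IsWF
  | 0 => (Set.finite_singleton 0).isWF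
  | k + 1 => hI.add (Tk_isWF hI k)

lemma mem_Tk {I : Set ℝ} : ∀ l : List ℝ, (∀ y ∈ l, y ∈ I) → l.sum ∈ Tk I l.length
  | [], _ => by simp [Tk]
  | y :: l, h => by
    simp only [List.sum_cons, List.length_cons, Tk]
    exact Set.add_mem_add (h y (by simp)) (mem_Tk l fun z hz => h z (by simp [hz]))

lemma sum_lower {δ : ℝ} : ∀ l : List ℝ, (∀ y ∈ l, δ ≤ y) → (l.length : ℝ) * δ ≤ l.sum
  | [], _ => by simp
  | y :: l, h => by
    have := sum_lower l fun z hz => h z (by simp [hz])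
    have hy := h y (by simp)
    simp only [List.sum_cons, List.length_cons]
    push_cast
    linarith

/-- finite unions of IsWF along an initial segment -/
def Uk (T : ℕ → Set ℝ) : ℕ → Set ℝ
  | 0 => ∅
  | k + 1 => Uk T k ∪ T k

lemma Uk_isWF {T : ℕ → Set ℝ} (h : ∀ k, (T k).IsWF) : ∀ N, (Uk T N).IsWF
  | 0 => Set.finite_empty.isWF
  | N + 1 => (Uk_isWF h N).union (h N)

lemma mem_Uk {T : ℕ → Set ℝ} {x : ℝ} {k N : ℕ} (hk : k < N) (hx : x ∈ T k) : x ∈ Uk T N := by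
  induction N with
  | zero => omega
  | succ n ih =>
    rcases Nat.lt_succ_iff_lt_or_eq.mp hk with h | rfl
    · exact Or.inl (ih h)
    · exact Or.inr hx

lemma iplus_isWF {I : Set ℝ} (hI : I ⊆ Set.Ioc 0 1) (h1 : (1 : ℝ) ∈ I) (hwf : I.IsWF) :
    (Iplus I).IsWF := by
  set δ : ℝ := hwf.min ⟨1, h1⟩ with hδ
  have hδI : δ ∈ I := hwf.min_mem _
  have hδpos : 0 < δ := (hI hδI).1
  have hδle : ∀ x ∈ I, δ ≤ x := fun x hx => hwf.min_le _ hx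
  set N : ℕ := ⌈1 / δ⌉₊ + 1 with hN
  have hsub : Iplus I ⊆ Uk (Tk I) N := by
    rintro x ⟨l, hne, hmem, hsum, hlt⟩
    have hlen : (l.length : ℝ) * δ ≤ x := hsum ▸ sum_lower l fun y hy => hδle y (hmem y hy)
    have : (l.length : ℝ) < 1 / δ := by
      rw [lt_div_iff₀ hδpos]; linarith
    have hlN : l.length < N := by
      have h2 : (l.length : ℝ) < (⌈1 / δ⌉₊ : ℝ) := this.trans_le (Nat.le_ceil _)
      have h3 : l.length < ⌈1 / δ⌉₊ := by exact_mod_cast h2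
      omega
    exact mem_Uk hlN (hsum ▸ mem_Tk l hmem)
  exact (Uk_isWF (Tk_isWF hwf) N).mono hsub

lemma iplus_pos {I : Set ℝ} (hI : I ⊆ Set.Ioc 0 1) {g : ℝ} (hg : g ∈ Iplus I) : 0 < g := by
  obtain ⟨l, hne, hmem, hsum, _⟩ := hg
  exact hsum ▸ List.sum_pos l (fun y hy => (hI (hmem y hy)).1) hne

/-- Lemma 4.4(3): `I` satisfies DCC iff `D(I)` satisfies DCC. -/
theorem DCC_iff_DCC_DD (I : Set ℝ) (hI : I ⊆ Set.Ioc 0 1) (h1 : (1 : ℝ) ∈ I) :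
    DCC I ↔ DCC (DD I) := by
  constructor
  · -- hard direction
    intro hdcc
    have hwfp : (Iplus I).IsWF := iplus_isWF hI h1 ((dcc_iff_isWF I).mp hdcc)
    rintro ⟨f, hf, hanti⟩
    -- every element of DD I is < 1
    have hlt1 : ∀ x ∈ DD I, x < 1 := by
      rintro x ⟨_, m, hm, g, hg, rfl⟩
      obtain ⟨l, -, -, -, hg1⟩ := hg
      have hm' : (0 : ℝ) < m := by exact_mod_cast hm
      rw [← add_div, div_lt_one hm']
      linarith
    have hf0 : f 0 < 1 := hlt1 _ (hf 0)
    -- choose decompositions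
    choose m hm g hg heq using fun n => (hf n).2
    -- bound on m
    set M : ℕ := ⌈1 / (1 - f 0)⌉₊ + 1 with hM
    have hmb : ∀ n, m n < M := by
      intro n
      have hmpos : (0 : ℝ) < m n := by exact_mod_cast hm n
      have hgp : 0 < g n := iplus_pos hI (hg n)
      have hfle : f n ≤ f 0 := hanti.antitone (Nat.zero_le n)
      have h1' : 1 - 1 / (m n : ℝ) < f 0 := by
        have : ((m n : ℝ) - 1) / m n < f n := by
          rw [heq n]
          have : 0 < g n / m n := div_pos hgp hmpos
          linarith
        calc 1 - 1 / (m n : ℝ) = ((m n : ℝ) - 1) / m n := by field_simp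
          _ < f n := this
          _ ≤ f 0 := hfle
      have hmlt : (m n : ℝ) < 1 / (1 - f 0) := by
        have h2 : 1 - f 0 < 1 / (m n : ℝ) := by linarith
        rw [lt_div_iff₀ (by linarith)]
        calc (m n : ℝ) * (1 - f 0) < (m n : ℝ) * (1 / m n) :=
          (mul_lt_mul_iff_right₀ hmpos).mpr h2
          _ = 1 := by field_simp
      have h3 := Nat.le_ceil (1 / (1 - f 0))
      have h4 : ((M : ℕ) : ℝ) = (⌈1 / (1 - f 0)⌉₊ : ℝ) + 1 := by push_cast [hM]; ring
      have h5 : (m n : ℝ) < (M : ℝ) := by linarith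
      exact_mod_cast h5
    obtain ⟨k, φ, hφ, hφk⟩ := pigeon_subseq m hmb
    have hk : 0 < k := hφk 0 ▸ hm (φ 0)
    have hk' : (0 : ℝ) < k := by exact_mod_cast hk
    -- the Iplus components along the subsequence
    apply (dcc_iff_isWF (Iplus I)).mpr hwfp
    refine ⟨fun n => g (φ n), fun n => hg (φ n), ?_⟩
    intro a b hab
    have h1' : f (φ b) < f (φ a) := hanti (hφ hab)
    have ea := heq (φ a); have eb := heq (φ b)
    rw [hφk a] at ea; rw [hφk b] at eb
    have : g (φ a) = (k : ℝ) * f (φ a) - ((k : ℝ) - 1) := by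
      rw [ea]; field_simp; ring
    have hb' : g (φ b) = (k : ℝ) * f (φ b) - ((k : ℝ) - 1) := by
      rw [eb]; field_simp; ring
    show g (φ b) < g (φ a)
    rw [this, hb']
    have := (mul_lt_mul_iff_right₀ hk').mpr h1'
    linarith
  · -- easy direction
    intro hdcc
    rintro ⟨f, hf, hanti⟩
    apply hdcc
    refine ⟨fun n => f (n + 1), fun n => ?_, fun a b hab => hanti (by omega)⟩
    have hlt : f (n + 1) < 1 := (hanti (Nat.succ_pos n)).trans_le (hI (hf 0)).2
    refine ⟨hlt.le, 1, one_pos, f (n + 1), ⟨[f (n + 1)], by simp, by simp [hf], by simp, hlt⟩, by norm_num⟩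
end

section
/- Suppose $I \subseteq \mathbb{R}_{>0}$ satisfies the descending chain condition and $K \subseteq \mathbb{R}$ satisfies the ascending chain condition, where both $I$ and $K$ are bounded. Then the set $X$ of all real numbers $c \in (0,1]$ such that there exist positive integers $m_1, \ldots, m_p$ and $k_1, \ldots, k_p$ (not all $k_i$ zero), elements $a \in I \cup \{0\}$ and $f_i \in I_+ \cup \{0\}$, and $k \in K$, with $a + \sum_{i=1}^p \left( \frac{m_i - 1}{m_i} + \frac{f_i}{m_i} + \frac{k_i c}{m_i} \right) = k$ and each summand $\frac{m_i-1}{m_i} + \frac{f_i}{m_i} + \frac{k_i c}{m_i} \leq 1$, satisfies the ascending chain condition. -/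
open scoped Classical Pointwise

noncomputable def Tm (c : ℝ) (x : ℕ × ℝ × ℕ) : ℝ :=
  ((x.1 : ℝ) - 1) / x.1 + x.2.1 / x.1 + (x.2.2 : ℝ) * c / x.1




lemma dcc_isWF {S : Set ℝ} (h : DCC S) : S.IsWF := by
  rw [Set.isWF_iff_no_descending_seq]
  intro f hf hmem
  exact h ⟨f, fun n => hmem n, hf⟩

lemma isWF_neg_of_acc {K : Set ℝ} (h : ACC K) : (Neg.neg '' K).IsWF := by
  rw [Set.isWF_iff_no_descending_seq]
  intro f hf hmem
  refine h ⟨fun n => -f n, fun n => ?_, fun a b hab => ?_⟩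
  · obtain ⟨x, hx, hfx⟩ := hmem n
    show -f n ∈ K
    rw [← hfx, neg_neg]; exact hx
  · simpa using hf hab

lemma isWF_natCast : (Set.range ((↑) : ℕ → ℝ)).IsWF := by
  rw [Set.isWF_iff_no_descending_seq]
  intro f hf hmem
  choose u hu using fun n => hmem n
  have hanti : ∀ n, u (n + 1) < u n := fun n => by
    have h2 := hf (Nat.lt_succ_self n)
    have h3 : (u (n + 1) : ℝ) < (u n : ℝ) := by rw [hu n, hu (n + 1)]; exact h2
    exact_mod_cast h3
  have h1 : ∀ n, u n + n ≤ u 0 := by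
    intro n
    induction n with
    | zero => simp
    | succ n ih => have := hanti n; omega
  have := h1 (u 0 + 1); omega

lemma exists_mono_subseq {S : Set ℝ} (hS : S.IsWF) (f : ℕ → ℝ) (hf : ∀ n, f n ∈ S) :
    ∃ φ : ℕ → ℕ, StrictMono φ ∧ Monotone (f ∘ φ) := by
  have hV : ∀ s : ℕ, (f '' {m | s ≤ m}).IsWF := fun s =>
    hS.mono (by rintro x ⟨m, _, rfl⟩; exact hf m)
  have hVne : ∀ s : ℕ, (f '' {m | s ≤ m}).Nonempty := fun s => ⟨f s, s, le_refl s, rfl⟩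
  have hex : ∀ s : ℕ, ∃ m, s ≤ m ∧ f m = (hV s).min (hVne s) := by
    intro s
    obtain ⟨m, hm, hfm⟩ := (hV s).min_mem (hVne s)
    exact ⟨m, hm, hfm⟩
  set nn : ℕ → ℕ := fun s => (hex s).choose with hnn
  have hnn_ge : ∀ s, s ≤ nn s := fun s => (hex s).choose_spec.1
  have hnn_min : ∀ s m, s ≤ m → f (nn s) ≤ f m := by
    intro s m hm
    rw [(hex s).choose_spec.2]
    exact (hV s).min_le _ ⟨m, hm, rfl⟩
  set φ : ℕ → ℕ := fun j => Nat.rec (nn 0) (fun _ prev => nn (prev + 1)) j with hφ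
  have hφ_succ : ∀ j, φ (j + 1) = nn (φ j + 1) := fun j => rfl
  have hmono : StrictMono φ := strictMono_nat_of_lt_succ fun j =>
    lt_of_lt_of_le (Nat.lt_succ_self _) (by rw [hφ_succ]; exact hnn_ge _)
  refine ⟨φ, hmono, monotone_nat_of_le_succ fun j => ?_⟩
  show f (φ j) ≤ f (φ (j + 1))
  cases j with
  | zero =>
    have h0 : φ 0 = nn 0 := rfl
    rw [h0]
    exact hnn_min 0 _ (Nat.zero_le _)
  | succ j =>
    rw [hφ_succ j]
    apply hnn_min (φ j + 1)
    have h1 : φ (j + 1) < φ (j + 1 + 1) := hmono (Nat.lt_succ_self (j + 1))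
    have h0 : φ j < φ (j + 1) := hmono (Nat.lt_succ_self j)
    omega

lemma exists_mono_subseq_family {q : ℕ} (S : Fin q → Set ℝ) (hS : ∀ j, (S j).IsWF)
    (g : Fin q → ℕ → ℝ) (hg : ∀ j n, g j n ∈ S j) :
    ∃ φ : ℕ → ℕ, StrictMono φ ∧ ∀ j, Monotone (g j ∘ φ) := by
  induction q with
  | zero => exact ⟨id, strictMono_id, fun j => j.elim0⟩
  | succ q ih =>
    obtain ⟨φ₁, hφ₁, hmono₁⟩ := ih (fun j => S j.castSucc) (fun j => hS _)
      (fun j => g j.castSucc) (fun j n => hg _ _)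
    obtain ⟨φ₂, hφ₂, hmono₂⟩ := exists_mono_subseq (hS (Fin.last q))
      (g (Fin.last q) ∘ φ₁) (fun n => hg _ _)
    refine ⟨φ₁ ∘ φ₂, hφ₁.comp hφ₂, fun j => ?_⟩
    induction j using Fin.lastCases with
    | last => exact hmono₂
    | cast i => exact (hmono₁ i).comp hφ₂.monotone



/-- sums of at most `j` elements of `I` -/
def sumsUpTo (I : Set ℝ) : ℕ → Set ℝ
  | 0 => {0}
  | (j + 1) => sumsUpTo I j ∪ (I + sumsUpTo I j)

lemma sumsUpTo_isWF {I : Set ℝ} (hI : I.IsWF) : ∀ j, (sumsUpTo I j).IsWF := by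
  intro j
  induction j with
  | zero => exact (Set.finite_singleton 0).isWF
  | succ j ih => exact ih.union (hI.add ih)

lemma sum_mem_sumsUpTo {I : Set ℝ} :
    ∀ (l : List ℝ), (∀ x ∈ l, x ∈ I) → ∀ j, l.length ≤ j → l.sum ∈ sumsUpTo I j := by
  intro l
  induction l with
  | nil =>
    intro _ j _
    induction j with
    | zero => exact rfl
    | succ j ih => exact Or.inl (ih (by simp))
  | cons x xs ih =>
    intro hmem j hlen
    cases j with
    | zero => simp at hlen
    | succ j =>
      refine Or.inr (Set.add_mem_add (hmem x (List.mem_cons_self)) ?_)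
      exact ih (fun y hy => hmem y (List.mem_cons_of_mem _ hy)) j (by simpa using hlen)

lemma iplus_ge {I : Set ℝ} {δ : ℝ} (hδ : 0 < δ) (hδI : ∀ x ∈ I, δ ≤ x) :
    ∀ f ∈ Iplus I, δ ≤ f := by
  rintro f ⟨l, hne, hmem, rfl, _⟩
  obtain ⟨x, xs, rfl⟩ := List.exists_cons_of_ne_nil hne
  have h1 : δ ≤ x := hδI x (hmem x (List.mem_cons_self))
  have h2 : (0 : ℝ) ≤ xs.sum :=
    List.sum_nonneg fun y hy => le_of_lt (lt_of_lt_of_le hδ (hδI y (hmem y (List.mem_cons_of_mem _ hy))))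
  simp only [List.sum_cons]
  linarith

lemma iplus_isWF_s5 {I : Set ℝ} (hI : I.IsWF) {δ : ℝ} (hδ : 0 < δ) (hδI : ∀ x ∈ I, δ ≤ x) :
    (Iplus I).IsWF := by
  refine (sumsUpTo_isWF hI ⌈1 / δ⌉₊).mono ?_
  rintro f ⟨l, hne, hmem, rfl, hlt⟩
  refine sum_mem_sumsUpTo l hmem _ ?_
  have hlb : ∀ x ∈ l, δ ≤ x := fun x hx => hδI x (hmem x hx)
  have h1 : (l.length : ℝ) * δ ≤ l.sum := by
    have := List.card_nsmul_le_sum l δ hlb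
    simpa [nsmul_eq_mul] using this
  have h2 : (l.length : ℝ) ≤ 1 / δ := by
    rw [le_div_iff₀ hδ]
    linarith
  exact_mod_cast h2.trans (Nat.le_ceil _)

lemma exists_pos_lb {I : Set ℝ} (hI : I.IsWF) (hpos : ∀ x ∈ I, 0 < x) :
    ∃ δ : ℝ, 0 < δ ∧ ∀ x ∈ I, δ ≤ x := by
  rcases I.eq_empty_or_nonempty with h | h
  · exact ⟨1, one_pos, by simp [h]⟩
  · exact ⟨hI.min h, hpos _ (hI.min_mem h), fun x hx => hI.min_le h hx⟩

/-- value of `Tm` as `1 - (1 - f - k c)/m`. -/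
lemma Tm_eq (c : ℝ) (m : ℕ) (f : ℝ) (k : ℕ) (hm : 0 < m) :
    Tm c (m, f, k) = 1 - (1 - f - k * c) / m := by
  have hm' : (m : ℝ) ≠ 0 := Nat.cast_ne_zero.mpr hm.ne'
  simp only [Tm]
  field_simp
  ring

lemma Tm_le_one_iff (c : ℝ) (m : ℕ) (f : ℝ) (k : ℕ) (hm : 0 < m) :
    Tm c (m, f, k) ≤ 1 ↔ f + k * c ≤ 1 := by
  rw [Tm_eq c m f k hm]
  have hm' : (0 : ℝ) < m := by exact_mod_cast hm
  constructor
  · intro h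
    have : 0 ≤ (1 - f - k * c) / m := by linarith
    have := (div_nonneg_iff.mp this)
    rcases this with ⟨h1, _⟩ | ⟨_, h2⟩
    · linarith
    · linarith
  · intro h
    have : 0 ≤ (1 - f - k * c) / m := div_nonneg (by linarith) hm'.le
    linarith

lemma Tm_nonneg (c : ℝ) (m : ℕ) (f : ℝ) (k : ℕ) (hm : 0 < m) (hf : 0 ≤ f) (hc : 0 ≤ c) :
    0 ≤ Tm c (m, f, k) := by
  have hm' : (0 : ℝ) < m := by exact_mod_cast hm
  have h1 : (1 : ℝ) ≤ m := by exact_mod_cast hm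
  unfold Tm
  have := div_nonneg (by linarith : (0:ℝ) ≤ (m : ℝ) - 1) hm'.le
  have := div_nonneg hf hm'.le
  have := div_nonneg (mul_nonneg (Nat.cast_nonneg k) hc) hm'.le
  simp only at *
  linarith

lemma Tm_pos (c : ℝ) (m : ℕ) (f : ℝ) (k : ℕ) (hm : 0 < m) (hf : 0 ≤ f) (hc : 0 < c)
    (hk : 0 < k) : 0 < Tm c (m, f, k) := by
  have hm' : (0 : ℝ) < m := by exact_mod_cast hm
  have h1 : (1 : ℝ) ≤ m := by exact_mod_cast hm
  have hk' : (1 : ℝ) ≤ k := by exact_mod_cast hk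
  unfold Tm
  have h2 := div_nonneg (by linarith : (0:ℝ) ≤ (m : ℝ) - 1) hm'.le
  have h3 := div_nonneg hf hm'.le
  have h4 : 0 < (k : ℝ) * c / m := div_pos (by nlinarith) hm'
  simp only at *
  linarith

lemma Tm_lb {m : ℕ} {f cn c₀ δ : ℝ} {k : ℕ} (hm : 0 < m) (hf : f = 0 ∨ δ ≤ f) (hf0 : 0 ≤ f)
    (hc0 : 0 < c₀) (hc : c₀ ≤ cn) (hδ : 0 < δ) (hT : Tm cn (m, f, k) ≠ 0) :
    min (1 / 2) (min δ c₀) ≤ Tm cn (m, f, k) := by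
  have hm' : (0 : ℝ) < m := by exact_mod_cast hm
  have hcn : 0 < cn := lt_of_lt_of_le hc0 hc
  rcases Nat.lt_or_ge m 2 with h2 | h2
  · -- m = 1
    have hm1 : m = 1 := by omega
    subst hm1
    have hTm : Tm cn (1, f, k) = f + k * cn := by
      unfold Tm; norm_num
    rw [hTm]
    rw [hTm] at hT
    rcases Nat.eq_zero_or_pos k with hk | hk
    · subst hk
      simp only [Nat.cast_zero, zero_mul, add_zero] at hT ⊢
      rcases hf with rfl | hf
      · exact absurd rfl hT
      · exact le_trans (min_le_right _ _) (le_trans (min_le_left _ _) hf)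
    · have hk' : (1 : ℝ) ≤ k := by exact_mod_cast hk
      have : c₀ ≤ (k : ℝ) * cn := by nlinarith
      refine le_trans (min_le_right _ _) (le_trans (min_le_right _ _) ?_)
      linarith
  · -- m ≥ 2 : Tm ≥ (m-1)/m ≥ 1/2
    have h2' : (2 : ℝ) ≤ m := by exact_mod_cast h2
    have hhalf : (1 / 2 : ℝ) ≤ ((m : ℝ) - 1) / m := by
      rw [div_le_div_iff₀ (by norm_num) hm']
      linarith
    have h3 : ((m : ℝ) - 1) / m ≤ Tm cn (m, f, k) := by
      unfold Tm
      have := div_nonneg hf0 hm'.le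
      have := div_nonneg (mul_nonneg (Nat.cast_nonneg k) hcn.le) hm'.le
      simp only at *
      linarith
    exact le_trans (min_le_left _ _) (hhalf.trans h3)

/-- key monotonicity of the summand -/
lemma Tm_mono {m₁ m₂ : ℕ} {f₁ f₂ c₁ c₂ : ℝ} {k : ℕ}
    (hm₁ : 0 < m₁) (hm : m₁ ≤ m₂) (hf₁ : 0 ≤ f₁) (hf : f₁ ≤ f₂)
    (hc₁ : 0 < c₁) (hc : c₁ ≤ c₂) (hle : f₂ + k * c₂ ≤ 1) :
    Tm c₁ (m₁, f₁, k) ≤ Tm c₂ (m₂, f₂, k) ∧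
      (0 < k → c₁ < c₂ → Tm c₁ (m₁, f₁, k) < Tm c₂ (m₂, f₂, k)) := by
  have hm₂ : 0 < m₂ := lt_of_lt_of_le hm₁ hm
  have hm₁' : (0 : ℝ) < m₁ := by exact_mod_cast hm₁
  have hm₂' : (0 : ℝ) < m₂ := by exact_mod_cast hm₂
  have hmm : (m₁ : ℝ) ≤ m₂ := by exact_mod_cast hm
  rw [Tm_eq c₁ m₁ f₁ k hm₁, Tm_eq c₂ m₂ f₂ k hm₂]
  set u₁ := 1 - f₁ - k * c₁ with hu₁
  set u₂ := 1 - f₂ - k * c₂ with hu₂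
  have hk0 : (0 : ℝ) ≤ k := Nat.cast_nonneg k
  have hu₂0 : 0 ≤ u₂ := by rw [hu₂]; linarith
  have hu21 : u₂ ≤ u₁ := by rw [hu₁, hu₂]; nlinarith
  have hA : u₂ / m₂ ≤ u₂ / m₁ := by
    rw [div_le_div_iff₀ hm₂' hm₁']
    nlinarith
  have hB : u₂ / m₁ ≤ u₁ / m₁ := (div_le_div_iff_of_pos_right hm₁').mpr hu21
  constructor
  · linarith
  · intro hk hcc
    have hu21' : u₂ < u₁ := by rw [hu₁, hu₂]; push_cast; nlinarith [(Nat.one_le_cast (α := ℝ)).mpr hk]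
    have hB' : u₂ / m₁ < u₁ / m₁ := (div_lt_div_iff_of_pos_right hm₁').mpr hu21'
    linarith


lemma list_sum_map_filter {α : Type*} (g : α → ℝ) (p : α → Bool) :
    ∀ l : List α, (∀ x ∈ l, p x = false → g x = 0) →
      ((l.filter p).map g).sum = (l.map g).sum := by
  intro l
  induction l with
  | nil => intro; simp
  | cons x xs ih =>
    intro h
    by_cases hx : p x
    · rw [List.filter_cons_of_pos hx]
      simp only [List.map_cons, List.sum_cons]
      rw [ih (fun y hy => h y (List.mem_cons_of_mem _ hy))]
    · rw [List.filter_cons_of_neg (by simpa using hx)]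
      simp only [List.map_cons, List.sum_cons]
      rw [ih (fun y hy => h y (List.mem_cons_of_mem _ hy)),
        h x (List.mem_cons_self) (by simpa using hx), zero_add]

lemma k_bound {m k : ℕ} {f cn c₀ : ℝ} (hm : 0 < m) (hf : 0 ≤ f) (hc0 : 0 < c₀)
    (hc : c₀ ≤ cn) (hT : Tm cn (m, f, k) ≤ 1) : k ≤ ⌊1 / c₀⌋₊ := by
  have hm' : (m : ℝ) ≠ 0 := Nat.cast_ne_zero.mpr hm.ne'
  have hm'' : (0 : ℝ) < m := by exact_mod_cast hm
  have h1 : f + k * cn ≤ 1 := by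
    have h := hT
    unfold Tm at h
    simp only at h
    rw [← add_div, ← add_div, div_le_one hm''] at h
    linarith
  have hk0 : (0 : ℝ) ≤ k := Nat.cast_nonneg k
  have h2 : (k : ℝ) * c₀ ≤ 1 := by nlinarith
  apply Nat.le_floor
  rw [le_div_iff₀ hc0]
  linarith

lemma Tm_mono' (x₁ x₂ : ℕ × ℝ × ℕ) (c₁ c₂ : ℝ) (hm₁ : 0 < x₁.1) (hm : x₁.1 ≤ x₂.1)
    (hf₁ : 0 ≤ x₁.2.1) (hf : x₁.2.1 ≤ x₂.2.1) (hk : x₁.2.2 = x₂.2.2)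
    (hc₁ : 0 < c₁) (hc : c₁ ≤ c₂) (hle : Tm c₂ x₂ ≤ 1) :
    Tm c₁ x₁ ≤ Tm c₂ x₂ ∧ (0 < x₁.2.2 → c₁ < c₂ → Tm c₁ x₁ < Tm c₂ x₂) := by
  obtain ⟨m₁, f₁, k₁⟩ := x₁
  obtain ⟨m₂, f₂, k₂⟩ := x₂
  simp only at hm₁ hm hf₁ hf hk ⊢
  subst hk
  have hm₂ : 0 < m₂ := lt_of_lt_of_le hm₁ hm
  have hle2 : f₂ + k₁ * c₂ ≤ 1 := (Tm_le_one_iff c₂ m₂ f₂ k₁ hm₂).mp hle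
  exact Tm_mono hm₁ hm hf₁ hf hc₁ hc hle2

/-- Lemma 4.5 (single-variable version): if `I ⊆ ℝ_{>0}` is bounded and
satisfies DCC and `K ⊆ ℝ` is bounded and satisfies ACC, then the set of
`c ∈ (0,1]` admitting a representation
`a + ∑ᵢ ((mᵢ-1)/mᵢ + fᵢ/mᵢ + kᵢ c/mᵢ) = k ∈ K` with each summand at most
one satisfies ACC. -/
theorem acc_of_thresholds (I K : Set ℝ) (hIpos : ∀ x ∈ I, 0 < x)
    (hIbdd : Bornology.IsBounded I) (hKbdd : Bornology.IsBounded K)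
    (hIdcc : DCC I) (hKacc : ACC K) :
    ACC {c : ℝ | c ∈ Set.Ioc 0 1 ∧ ∃ p : ℕ, 0 < p ∧ ∃ m k : Fin p → ℕ,
      (∀ i, 0 < m i) ∧ (∃ i, 0 < k i) ∧
      ∃ a ∈ insert (0 : ℝ) I, ∃ f : Fin p → ℝ,
        (∀ i, f i ∈ insert (0 : ℝ) (Iplus I)) ∧ ∃ κ ∈ K,
          a + ∑ i, (((m i : ℝ) - 1) / (m i) + f i / (m i) + (k i : ℝ) * c / (m i)) = κ ∧
          ∀ i, ((m i : ℝ) - 1) / (m i) + f i / (m i) + (k i : ℝ) * c / (m i) ≤ 1} := by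
  rintro ⟨c, hc, hcmono⟩
  have hc0 : (0 : ℝ) < c 0 := (hc 0).1.1
  have hcpos : ∀ n, 0 < c n := fun n => (hc n).1.1
  have hcge : ∀ n, c 0 ≤ c n := fun n => hcmono.monotone (Nat.zero_le n)
  obtain ⟨BK, hBK⟩ := hKbdd.bddAbove
  have hIWF : I.IsWF := dcc_isWF hIdcc
  obtain ⟨δ, hδ, hδI⟩ := exists_pos_lb hIWF hIpos
  have hIplusWF : (insert (0 : ℝ) (Iplus I)).IsWF := by
    rw [Set.insert_eq]
    exact (Set.finite_singleton 0).isWF.union (iplus_isWF_s5 hIWF hδ hδI)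
  have hInsIWF : (insert (0 : ℝ) I).IsWF := by
    rw [Set.insert_eq]
    exact (Set.finite_singleton 0).isWF.union hIWF
  have hfnn : ∀ g ∈ insert (0 : ℝ) (Iplus I), 0 ≤ g := by
    rintro g (rfl | hg)
    · exact le_refl 0
    · exact le_of_lt (lt_of_lt_of_le hδ (iplus_ge hδ hδI g hg))
  have hfd : ∀ g ∈ insert (0 : ℝ) (Iplus I), g = 0 ∨ δ ≤ g := by
    rintro g (rfl | hg)
    · exact Or.inl rfl
    · exact Or.inr (iplus_ge hδ hδI g hg)
  have hann : ∀ a ∈ insert (0 : ℝ) I, 0 ≤ a := by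
    rintro a (rfl | ha)
    · exact le_refl 0
    · exact le_of_lt (hIpos a ha)
  set ε : ℝ := min (1 / 2) (min δ (c 0)) with hεdef
  have hε : 0 < ε := lt_min (by norm_num) (lt_min hδ hc0)
  set P : ℕ := ⌈BK / ε⌉₊ with hPdef
  set Kb : ℕ := ⌊1 / c 0⌋₊ with hKbdef
  -- Step 1: normalized representations of fixed length P
  have hrep : ∀ n : ℕ, ∃ D : Fin P → ℕ × ℝ × ℕ,
      (∀ j, 0 < (D j).1) ∧ (∀ j, (D j).2.1 ∈ insert (0 : ℝ) (Iplus I)) ∧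
      (∀ j, (D j).2.2 ≤ Kb) ∧ (∃ j, 0 < (D j).2.2) ∧
      (∀ j, Tm (c n) (D j) ≤ 1) ∧
      ∃ a ∈ insert (0 : ℝ) I, ∃ κ ∈ K, a + ∑ j, Tm (c n) (D j) = κ := by
    intro n
    obtain ⟨hcIoc, p, hp, m, k, hm, ⟨i₀, hk₀⟩, a, ha, f, hf, κ, hκ, heq, hle⟩ := hc n
    have hc0n : 0 < c n := hcIoc.1
    have hle' : ∀ i, Tm (c n) (m i, f i, k i) ≤ 1 := fun i => hle i
    set l₀ : List (ℕ × ℝ × ℕ) := (List.finRange p).map (fun i => (m i, f i, k i)) with hl₀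
    have hsum₀ : (l₀.map (Tm (c n))).sum = ∑ i, Tm (c n) (m i, f i, k i) := by
      rw [hl₀, List.map_map]
      exact (Fin.sum_univ_def _).symm
    have heq₀ : a + (l₀.map (Tm (c n))).sum = κ := by
      rw [hsum₀, ← heq]
      rfl
    have hQ₀ : ∀ x ∈ l₀, 0 < x.1 ∧ x.2.1 ∈ insert (0 : ℝ) (Iplus I) ∧ Tm (c n) x ≤ 1 := by
      intro x hx
      obtain ⟨i, -, rfl⟩ := List.mem_map.mp hx
      exact ⟨hm i, hf i, hle' i⟩
    set l₁ : List (ℕ × ℝ × ℕ) := l₀.filter (fun x => decide (Tm (c n) x ≠ 0)) with hl₁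
    have hmem₁ : ∀ x ∈ l₁, x ∈ l₀ ∧ Tm (c n) x ≠ 0 := by
      intro x hx
      obtain ⟨h1, h2⟩ := List.mem_filter.mp hx
      exact ⟨h1, of_decide_eq_true h2⟩
    have hsum₁ : (l₁.map (Tm (c n))).sum = (l₀.map (Tm (c n))).sum := by
      apply list_sum_map_filter
      intro x _ hdx
      by_contra hne
      rw [decide_eq_false_iff_not] at hdx
      exact hdx hne
    have hwpos : 0 < Tm (c n) (m i₀, f i₀, k i₀) :=
      Tm_pos (c n) (m i₀) (f i₀) (k i₀) (hm i₀) (hfnn _ (hf i₀)) hc0n hk₀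
    have hw₁ : (m i₀, f i₀, k i₀) ∈ l₁ := by
      rw [hl₁, List.mem_filter]
      refine ⟨List.mem_map.mpr ⟨i₀, List.mem_finRange i₀, rfl⟩, ?_⟩
      rw [decide_eq_true_eq]
      exact ne_of_gt hwpos
    have hεle : ∀ x ∈ l₁, ε ≤ Tm (c n) x := by
      intro x hx
      obtain ⟨hx₀, hxne⟩ := hmem₁ x hx
      obtain ⟨hm1, hf1, -⟩ := hQ₀ x hx₀
      exact Tm_lb hm1 (hfd _ hf1) (hfnn _ hf1) hc0 (hcge n) hδ hxne
    have hlen₁ : l₁.length ≤ P := by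
      have h1 : (l₁.length : ℝ) * ε ≤ (l₁.map (Tm (c n))).sum := by
        have := List.card_nsmul_le_sum (l₁.map (Tm (c n))) ε (by
          intro y hy
          obtain ⟨x, hx, rfl⟩ := List.mem_map.mp hy
          exact hεle x hx)
        simpa [nsmul_eq_mul] using this
      have h2 : (l₁.map (Tm (c n))).sum ≤ BK := by
        rw [hsum₁]
        have h3 : κ ≤ BK := hBK hκ
        have h4 : 0 ≤ a := hann a ha
        linarith
      have h5 : (l₁.length : ℝ) ≤ BK / ε := by
        rw [le_div_iff₀ hε]
        linarith
      have h6 : (l₁.length : ℝ) ≤ (P : ℝ) := h5.trans (Nat.le_ceil _)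
      exact_mod_cast h6
    set l₂ : List (ℕ × ℝ × ℕ) := l₁ ++ List.replicate (P - l₁.length) ((1 : ℕ), (0 : ℝ), (0 : ℕ))
      with hl₂
    have hlen₂ : l₂.length = P := by
      rw [hl₂]
      simp only [List.length_append, List.length_replicate]
      omega
    have hTd : Tm (c n) ((1 : ℕ), (0 : ℝ), (0 : ℕ)) = 0 := by
      unfold Tm; norm_num
    have hsum₂ : (l₂.map (Tm (c n))).sum = (l₁.map (Tm (c n))).sum := by
      rw [hl₂, List.map_append, List.sum_append, List.map_replicate, hTd,
        List.sum_replicate, smul_zero, add_zero]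
    have hQ₂ : ∀ x ∈ l₂, 0 < x.1 ∧ x.2.1 ∈ insert (0 : ℝ) (Iplus I) ∧ Tm (c n) x ≤ 1 := by
      intro x hx
      rcases List.mem_append.mp hx with hx | hx
      · exact hQ₀ x (hmem₁ x hx).1
      · have := List.eq_of_mem_replicate hx
        subst this
        exact ⟨one_pos, Set.mem_insert 0 _, by rw [hTd]; norm_num⟩
    refine ⟨fun j => l₂.get (Fin.cast hlen₂.symm j), ?_, ?_, ?_, ?_, ?_, a, ha, κ, hκ, ?_⟩
    · intro j; exact (hQ₂ _ (l₂.get_mem _)).1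
    · intro j; exact (hQ₂ _ (l₂.get_mem _)).2.1
    · intro j
      obtain ⟨h1, h2, h3⟩ := hQ₂ _ (l₂.get_mem _)
      exact k_bound h1 (hfnn _ h2) hc0 (hcge n) h3
    · have hw₂ : (m i₀, f i₀, k i₀) ∈ l₂ := List.mem_append_left _ hw₁
      obtain ⟨i, hi⟩ := List.mem_iff_get.mp hw₂
      refine ⟨⟨i.1, hlen₂ ▸ i.2⟩, ?_⟩
      exact (by rw [hi]; exact hk₀ : (0 : ℕ) < (l₂.get i).2.2)
    · intro j; exact (hQ₂ _ (l₂.get_mem _)).2.2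
    · have hs : ∑ j : Fin P, Tm (c n) (l₂.get (Fin.cast hlen₂.symm j))
          = (l₂.map (Tm (c n))).sum := by
        rw [← List.ofFn_getElem_eq_map l₂ (Tm (c n)), Fin.sum_ofFn]
        exact (Fintype.sum_equiv (finCongr hlen₂.symm)
          (fun j => Tm (c n) (l₂.get (Fin.cast hlen₂.symm j)))
          (fun i => Tm (c n) (l₂.get i)) (fun j => rfl))
      rw [hs, hsum₂, hsum₁]
      exact heq₀
  choose D hD1 hD2 hD3 hD4 hD5 a ha κ hκ heqn using hrep
  -- Step 2: pigeonhole to fix the k-data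
  set g : ℕ → (Fin P → Fin (Kb + 1)) :=
    fun n j => ⟨(D n j).2.2, Nat.lt_succ_of_le (hD3 n j)⟩ with hg
  obtain ⟨y, hy⟩ := Finite.exists_infinite_fiber g
  have hyinf : {n : ℕ | g n = y}.Infinite := Set.infinite_coe_iff.mp hy
  set φ₀ : ℕ → ℕ := Nat.nth (fun n => g n = y) with hφ₀def
  have hφ₀ : StrictMono φ₀ := Nat.nth_strictMono hyinf
  have hkconst : ∀ t j, (D (φ₀ t) j).2.2 = (y j : ℕ) := by
    intro t j
    have := Nat.nth_mem_of_infinite hyinf t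
    exact congrArg Fin.val (congrFun this j)
  -- Step 3: extract monotone subsequences
  obtain ⟨φ₁, hφ₁, hM⟩ := exists_mono_subseq_family (fun _ : Fin P => Set.range ((↑) : ℕ → ℝ))
    (fun _ => isWF_natCast) (fun j t => ((D (φ₀ t) j).1 : ℝ)) (fun j t => ⟨_, rfl⟩)
  obtain ⟨φ₂, hφ₂, hF⟩ := exists_mono_subseq_family (fun _ : Fin P => insert (0 : ℝ) (Iplus I))
    (fun _ => hIplusWF) (fun j t => (D (φ₀ (φ₁ t)) j).2.1) (fun j t => hD2 _ _)
  obtain ⟨φ₃, hφ₃, hA⟩ := exists_mono_subseq hInsIWF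
    (fun t => a (φ₀ (φ₁ (φ₂ t)))) (fun t => ha _)
  obtain ⟨φ₄, hφ₄, hKm⟩ := exists_mono_subseq (isWF_neg_of_acc hKacc)
    (fun t => -κ (φ₀ (φ₁ (φ₂ (φ₃ t))))) (fun t => ⟨_, hκ _, rfl⟩)
  set t₀ : ℕ := φ₁ (φ₂ (φ₃ (φ₄ 0))) with ht₀
  set t₁ : ℕ := φ₁ (φ₂ (φ₃ (φ₄ 1))) with ht₁
  set n₀ : ℕ := φ₀ t₀ with hn₀
  set n₁ : ℕ := φ₀ t₁ with hn₁
  have h01 : (0 : ℕ) < 1 := Nat.zero_lt_one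
  have htlt : t₀ < t₁ := hφ₁ (hφ₂ (hφ₃ (hφ₄ h01)))
  have hclt : c n₀ < c n₁ := hcmono (hφ₀ htlt)
  have hMle : ∀ j, (D n₀ j).1 ≤ (D n₁ j).1 := by
    intro j
    have h := hM j (le_of_lt (hφ₂ (hφ₃ (hφ₄ h01))))
    simp only [Function.comp_apply] at h
    exact_mod_cast h
  have hFle : ∀ j, (D n₀ j).2.1 ≤ (D n₁ j).2.1 := by
    intro j
    exact hF j (le_of_lt (hφ₃ (hφ₄ h01)))
  have hAle : a n₀ ≤ a n₁ := hA (le_of_lt (hφ₄ h01))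
  have hKle : κ n₁ ≤ κ n₀ := by
    have := hKm (le_of_lt h01)
    simp only [Function.comp_apply] at this
    linarith [this]
  have hkeq : ∀ j, (D n₀ j).2.2 = (D n₁ j).2.2 := fun j =>
    (hkconst t₀ j).trans (hkconst t₁ j).symm
  -- Step 4: contradiction
  have key : ∀ j : Fin P, Tm (c n₀) (D n₀ j) ≤ Tm (c n₁) (D n₁ j) ∧
      (0 < (D n₀ j).2.2 → Tm (c n₀) (D n₀ j) < Tm (c n₁) (D n₁ j)) := by
    intro j
    have h := Tm_mono' (D n₀ j) (D n₁ j) (c n₀) (c n₁) (hD1 n₀ j) (hMle j)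
      (hfnn _ (hD2 n₀ j)) (hFle j) (hkeq j) (hcpos n₀) (le_of_lt hclt) (hD5 n₁ j)
    exact ⟨h.1, fun hk => h.2 hk hclt⟩
  obtain ⟨j₀, hj₀⟩ := hD4 n₀
  have hsumlt : ∑ j, Tm (c n₀) (D n₀ j) < ∑ j, Tm (c n₁) (D n₁ j) := by
    apply Finset.sum_lt_sum (fun j _ => (key j).1)
    exact ⟨j₀, Finset.mem_univ _, (key j₀).2 hj₀⟩
  have he₀ := heqn n₀
  have he₁ := heqn n₁
  linarith
end

section
/- Every element $a$ of $N_1$ with $a \neq 1$ satisfies $a \leq 5/6$. Here $a \in N_1$ means there exist positive integers $m_1,\ldots,m_r$ and nonnegative integers $k_1,\ldots,k_r$ with $\sum k_i \geq 1$, such that $\sum_{i=1}^r \left(\frac{m_i-1}{m_i} + \frac{k_i a}{m_i}\right) = 2$ and each term $\frac{m_i-1}{m_i} + \frac{k_i a}{m_i} \leq 1$. -/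
/-- The set `N₁`: `mᵢ ≥ 1`, `kᵢ ≥ 0` with at least one `kᵢ` positive,
each term `(mᵢ-1)/mᵢ + kᵢ a/mᵢ ≤ 1`, and the terms sum to `2`. -/
def None' : Set ℝ :=
  {a | a ∈ Set.Ioc 0 1 ∧ ∃ r : ℕ, 0 < r ∧ ∃ m k : Fin r → ℕ,
    (∀ i, 0 < m i) ∧ (∃ i, 0 < k i) ∧
    (∑ i, (((m i : ℝ) - 1) / (m i) + (k i : ℝ) * a / (m i)) = 2) ∧
    (∀ i, ((m i : ℝ) - 1) / (m i) + (k i : ℝ) * a / (m i) ≤ 1)}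

/-- Every element of `N₁` other than `1` is at most `5/6`. -/
theorem N1_le_five_sixths (a : ℝ) (ha : a ∈ None') (hne : a ≠ 1) :
    a ≤ 5 / 6 := by
  by_contra hcon
  push_neg at hcon
  obtain ⟨⟨ha0, ha1⟩, r, hr, m, k, hm, ⟨i0, hk0⟩, hsum, hle⟩ := ha
  have ha1' : a < 1 := lt_of_le_of_ne ha1 hne
  have hmpos : ∀ i, (0:ℝ) < m i := fun i => by exact_mod_cast hm i
  have hm1 : ∀ i, (1:ℝ) ≤ m i := fun i => by exact_mod_cast hm i
  set t : Fin r → ℝ := fun i => ((m i : ℝ) - 1) / (m i) + (k i : ℝ) * a / (m i) with ht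
  have hle' : ∀ i, t i ≤ 1 := by intro i; rw [ht]; exact hle i
  clear_value t
  have htdef : ∀ i, t i = ((m i : ℝ) - 1 + (k i : ℝ) * a) / (m i) := by
    intro i
    rw [ht]
    simp only [← add_div]
  have hsum' : ∑ i, t i = 2 := hsum
  have key : ∀ i, (k i : ℝ) * a ≤ 1 := by
    intro i
    have h : t i ≤ 1 := hle' i
    rw [htdef i, div_le_one (hmpos i)] at h
    linarith
  have hk1 : ∀ i, 0 < k i → k i = 1 := by
    intro i hi
    by_contra hne2
    have h2 : 2 ≤ k i := by omega
    have h2' : (2:ℝ) ≤ (k i : ℝ) := by exact_mod_cast h2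
    nlinarith [key i]
  have hlt1 : ∀ i, t i < 1 := by
    intro i
    rw [htdef i, div_lt_one (hmpos i)]
    rcases Nat.eq_zero_or_pos (k i) with h | h
    · simp [h]
    · rw [hk1 i h]
      push_cast
      linarith
  have htA : ∀ i, 0 < k i → a ≤ t i := by
    intro i hi
    rw [htdef i, le_div_iff₀ (hmpos i)]
    rw [hk1 i hi]
    push_cast
    nlinarith [hm1 i]
  have htB2 : ∀ i, k i = 0 → 2 ≤ m i → 1/2 ≤ t i := by
    intro i hki hmi
    have hmi' : (2:ℝ) ≤ (m i : ℝ) := by exact_mod_cast hmi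
    rw [htdef i, le_div_iff₀ (hmpos i), hki]
    push_cast
    linarith
  have htB3 : ∀ i, k i = 0 → 3 ≤ m i → 2/3 ≤ t i := by
    intro i hki hmi
    have hmi' : (3:ℝ) ≤ (m i : ℝ) := by exact_mod_cast hmi
    rw [htdef i, le_div_iff₀ (hmpos i), hki]
    push_cast
    linarith
  have htBeq : ∀ i, k i = 0 → m i = 2 → t i = 1/2 := by
    intro i hki hmi
    rw [htdef i, hki, hmi]
    norm_num
  -- the finsets
  classical
  set A : Finset (Fin r) := Finset.univ.filter (fun i => 0 < k i) with hA
  set B : Finset (Fin r) := Finset.univ.filter (fun i => k i = 0 ∧ 2 ≤ m i) with hB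
  have hdisj : Disjoint A B := by
    rw [Finset.disjoint_left]
    intro i hiA hiB
    simp only [hA, hB, Finset.mem_filter, Finset.mem_univ, true_and] at hiA hiB
    omega
  have hsumAB : ∑ i ∈ A ∪ B, t i = 2 := by
    rw [← hsum']
    apply Finset.sum_subset (Finset.subset_univ _)
    intro x _ hx
    simp only [hA, hB, Finset.mem_union, Finset.mem_filter, Finset.mem_univ, true_and,
      not_or, not_and, not_lt, not_le] at hx
    have hkx : k x = 0 := by omega
    have hmx : m x = 1 := by
      have := hm x
      have := hx.2 hkx
      omega
    rw [htdef x, hkx, hmx]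
    norm_num
  have hi0A : i0 ∈ A := by
    simp only [hA, Finset.mem_filter, Finset.mem_univ, true_and]
    exact hk0
  have hAne : A.Nonempty := ⟨i0, hi0A⟩
  have hApos : 0 < A.card := Finset.card_pos.mpr hAne
  -- upper count bound : 2 < card A + card B
  have hcard_low : (2:ℝ) < A.card + B.card := by
    have h1 : ∑ i ∈ A ∪ B, t i < ∑ i ∈ A ∪ B, (1:ℝ) := by
      apply Finset.sum_lt_sum_of_nonempty
      · exact ⟨i0, Finset.mem_union_left _ hi0A⟩
      · intro i _; exact hlt1 i
    rw [hsumAB, Finset.sum_const, nsmul_eq_mul, mul_one] at h1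
    have h2 : ((A ∪ B).card : ℝ) ≤ (A.card : ℝ) + (B.card : ℝ) := by
      exact_mod_cast Finset.card_union_le A B
    linarith
  -- lower weight bound : 5/6 * card A + 1/2 * card B < 2
  have hsumA : (A.card : ℝ) * a ≤ ∑ i ∈ A, t i := by
    have := Finset.card_nsmul_le_sum A t a (fun i hi => by
      simp only [hA, Finset.mem_filter, Finset.mem_univ, true_and] at hi
      exact htA i hi)
    rwa [nsmul_eq_mul] at this
  have hsumB : (B.card : ℝ) * (1/2) ≤ ∑ i ∈ B, t i := by
    have := Finset.card_nsmul_le_sum B t (1/2) (fun i hi => by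
      simp only [hB, Finset.mem_filter, Finset.mem_univ, true_and] at hi
      exact htB2 i hi.1 hi.2)
    rwa [nsmul_eq_mul] at this
  have hsplit : ∑ i ∈ A, t i + ∑ i ∈ B, t i = 2 := by
    rw [← Finset.sum_union hdisj, hsumAB]
  have hAcard1 : (1:ℝ) ≤ (A.card : ℝ) := by exact_mod_cast hApos
  have hweight : (5/6) * (A.card : ℝ) + (1/2) * (B.card : ℝ) < 2 := by
    nlinarith
  -- conclude card A = 1, card B = 2
  have hnat1 : 2 < A.card + B.card := by exact_mod_cast hcard_low
  have hnat2 : 5 * A.card + 3 * B.card < 12 := by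
    have : (5 * A.card + 3 * B.card : ℝ) < 12 := by push_cast; linarith
    exact_mod_cast this
  have hcA : A.card = 1 := by omega
  have hcB : B.card = 2 := by omega
  obtain ⟨x, hxA⟩ := Finset.card_eq_one.mp hcA
  obtain ⟨y, z, hyz, hBxy⟩ := Finset.card_eq_two.mp hcB
  have hxmem : x ∈ A := by rw [hxA]; exact Finset.mem_singleton_self x
  have hymem : y ∈ B := by rw [hBxy]; simp
  have hzmem : z ∈ B := by rw [hBxy]; simp
  simp only [hA, Finset.mem_filter, Finset.mem_univ, true_and] at hxmem
  simp only [hB, Finset.mem_filter, Finset.mem_univ, true_and] at hymem hzmem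
  have teq : t x + t y + t z = 2 := by
    rw [hxA, hBxy] at hsumAB
    rw [Finset.sum_union (hxA ▸ hBxy ▸ hdisj), Finset.sum_singleton,
      Finset.sum_pair hyz] at hsumAB
    linarith
  have hxa : a ≤ t x := htA x hxmem
  have hxlt : t x < 1 := hlt1 x
  rcases Nat.lt_or_ge (m y) 3 with hy3 | hy3
  · have hy2 : m y = 2 := by omega
    have hty : t y = 1/2 := htBeq y hymem.1 hy2
    rcases Nat.lt_or_ge (m z) 3 with hz3 | hz3
    · have hz2 : m z = 2 := by omega
      have htz : t z = 1/2 := htBeq z hzmem.1 hz2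
      linarith
    · have htz : 2/3 ≤ t z := htB3 z hzmem.1 hz3
      linarith
  · have hty : 2/3 ≤ t y := htB3 y hymem.1 hy3
    have htz : 1/2 ≤ t z := htB2 z hzmem.1 hzmem.2
    linarith
end

section
/- Suppose $r \geq 1$ and we have positive integers $m_1, \ldots, m_r$ and nonnegative integers $k_1, \ldots, k_r$, and a real $a$ with $5/6 < a < 1$, such that each term $t_i = \frac{m_i - 1}{m_i} + \frac{k_i a}{m_i}$ satisfies $t_i \leq 1$. Then $\sum_{i=1}^r t_i \neq 2$ whenever at least one $k_i > 0$. (Hence no $a \in (5/6, 1)$ lies in $N_1$.) -/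
/-- The upper-bound half of Lemma 4.6: for `a ∈ (5/6, 1)`, no finite sum of
terms `tᵢ = (mᵢ-1)/mᵢ + kᵢ a/mᵢ ≤ 1` (with `mᵢ ≥ 1`, `kᵢ ≥ 0`, at least
one `kᵢ > 0`) equals `2`.  Hence no `a ∈ (5/6, 1)` lies in `N₁`. -/
theorem no_sum_eq_two (r : ℕ) (hr : 1 ≤ r) (m k : Fin r → ℕ)
    (hm : ∀ i, 0 < m i) (a : ℝ) (ha1 : 5 / 6 < a) (ha2 : a < 1)
    (hle : ∀ i, ((m i : ℝ) - 1) / (m i) + (k i : ℝ) * a / (m i) ≤ 1)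
    (hk : ∃ i, 0 < k i) :
    ∑ i, (((m i : ℝ) - 1) / (m i) + (k i : ℝ) * a / (m i)) ≠ 2 := by
  intro hsum
  set t : Fin r → ℝ := fun i => ((m i : ℝ) - 1) / (m i) + (k i : ℝ) * a / (m i) with ht
  clear_value t
  have ha0 : (0:ℝ) < a := by linarith
  have hmpos : ∀ i, (0:ℝ) < (m i : ℝ) := fun i => by exact_mod_cast hm i
  -- each k i ≤ 1
  have hk1 : ∀ i, k i ≤ 1 := by
    intro i
    by_contra h
    push_neg at h
    have h2 : (2:ℝ) ≤ (k i : ℝ) := by exact_mod_cast h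
    have hmi := hmpos i
    have hka : (k i : ℝ) * a ≤ 1 := by
      have h3 := hle i
      rw [← add_div, div_le_one hmi] at h3
      linarith
    nlinarith
  -- bounds on terms
  have htub : ∀ i, t i < 1 := by
    intro i
    have hmi := hmpos i
    have hka : (k i : ℝ) * a < 1 := by
      rcases Nat.le_one_iff_eq_zero_or_eq_one.mp (hk1 i) with h | h <;> simp [h] <;> linarith
    simp only [ht]
    rw [← add_div, div_lt_one hmi]
    linarith
  have htS : ∀ i, k i = 1 → a ≤ t i := by
    intro i h
    have hmi := hmpos i
    have hm1 : (1:ℝ) ≤ (m i : ℝ) := by exact_mod_cast hm i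
    simp only [ht]
    simp only [h, Nat.cast_one, one_mul]
    rw [← add_div, le_div_iff₀ hmi]
    nlinarith
  have htT : ∀ i, k i = 0 → t i = 1 - 1/(m i : ℝ) := by
    intro i h
    have hmi := hmpos i
    simp only [ht]
    rw [h]
    push_cast
    field_simp
    ring
  have htnn : ∀ i, 0 ≤ t i := by
    intro i
    have hmi := hmpos i
    have hm1 : (1:ℝ) ≤ (m i : ℝ) := by exact_mod_cast hm i
    have : (0:ℝ) ≤ (k i : ℝ) * a / (m i : ℝ) := by positivity
    have : (0:ℝ) ≤ ((m i : ℝ) - 1) / (m i : ℝ) := by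
      apply div_nonneg <;> linarith
    simp only [ht]
    positivity
  classical
  set S : Finset (Fin r) := Finset.univ.filter (fun i => k i = 1) with hS
  set T : Finset (Fin r) := Finset.univ.filter (fun i => k i ≠ 1 ∧ 2 ≤ m i) with hT
  -- S nonempty
  have hSne : S.Nonempty := by
    obtain ⟨i, hi⟩ := hk
    refine ⟨i, ?_⟩
    simp only [hS, Finset.mem_filter, Finset.mem_univ, true_and]
    have := hk1 i
    omega
  -- sum splits
  have hsplit : ∑ i, t i = ∑ i ∈ S, t i + ∑ i ∈ Finset.univ.filter (fun i => ¬ k i = 1), t i :=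
    (Finset.sum_filter_add_sum_filter_not _ _ _).symm
  have hzero : ∑ i ∈ Finset.univ.filter (fun i => ¬ k i = 1), t i = ∑ i ∈ T, t i := by
    rw [← Finset.sum_filter_add_sum_filter_not (Finset.univ.filter (fun i => ¬ k i = 1)) (fun i => 2 ≤ m i) t]
    have h1 : (Finset.univ.filter (fun i => ¬ k i = 1)).filter (fun i => 2 ≤ m i) = T := by
      rw [hT, Finset.filter_filter]
    have h2 : ∑ i ∈ (Finset.univ.filter (fun i => ¬ k i = 1)).filter (fun i => ¬ 2 ≤ m i), t i = 0 := by
      apply Finset.sum_eq_zero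
      intro i hi
      simp only [Finset.mem_filter] at hi
      have hk0 : k i = 0 := by have := hk1 i; omega
      have hm1 : m i = 1 := by have := hm i; omega
      rw [htT i hk0, hm1]
      norm_num
    rw [h1, h2, add_zero]
  have hST : ∑ i ∈ S, t i + ∑ i ∈ T, t i = 2 := by
    rw [← hzero, ← hsplit]; exact hsum
  -- bounds on the sums
  have hSub : ∑ i ∈ S, t i < S.card := by
    calc ∑ i ∈ S, t i < ∑ i ∈ S, (1:ℝ) := Finset.sum_lt_sum_of_nonempty hSne (fun i _ => htub i)
    _ = S.card := by simp
  have hSlb : (5/6 : ℝ) * S.card < ∑ i ∈ S, t i := by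
    calc (5/6:ℝ) * S.card = ∑ i ∈ S, (5/6:ℝ) := by rw [Finset.sum_const, nsmul_eq_mul, mul_comm]
    _ < ∑ i ∈ S, t i := Finset.sum_lt_sum_of_nonempty hSne (fun i hi => by
        have hki : k i = 1 := (Finset.mem_filter.mp hi).2
        have := htS i hki; linarith)
  have hTub : ∑ i ∈ T, t i ≤ T.card := by
    calc ∑ i ∈ T, t i ≤ ∑ i ∈ T, (1:ℝ) := Finset.sum_le_sum (fun i _ => le_of_lt (htub i))
    _ = T.card := by simp
  have hTlb : (1/2 : ℝ) * T.card ≤ ∑ i ∈ T, t i := by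
    calc (1/2:ℝ) * T.card = ∑ i ∈ T, (1/2:ℝ) := by rw [Finset.sum_const, nsmul_eq_mul, mul_comm]
    _ ≤ ∑ i ∈ T, t i := Finset.sum_le_sum (fun i hi => by
        obtain ⟨-, hki, hmi⟩ := Finset.mem_filter.mp hi
        have hk0 : k i = 0 := by have := hk1 i; omega
        rw [htT i hk0]
        have hm2 : (2:ℝ) ≤ (m i : ℝ) := by exact_mod_cast hmi
        have : 1/(m i : ℝ) ≤ 1/2 := by
          apply one_div_le_one_div_of_le <;> linarith
        linarith)
  -- card constraints
  have hc1 : (2:ℝ) < S.card + T.card := by linarith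
  have hc2 : (5/6:ℝ) * S.card + (1/2:ℝ) * T.card < 2 := by linarith
  have hcard1 : 3 ≤ S.card + T.card := by
    by_contra h
    push_neg at h
    have : (S.card : ℝ) + T.card ≤ 2 := by
      have : S.card + T.card ≤ 2 := by omega
      exact_mod_cast this
    linarith
  have hcard2 : 5 * S.card + 3 * T.card ≤ 11 := by
    by_contra h
    push_neg at h
    have : (12:ℝ) ≤ 5 * S.card + 3 * T.card := by
      have : 12 ≤ 5 * S.card + 3 * T.card := by omega
      exact_mod_cast this
    linarith
  have hSone : S.card = 1 := by
    have := hSne.card_pos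
    omega
  have hTtwo : T.card = 2 := by omega
  obtain ⟨i0, hSi0⟩ := Finset.card_eq_one.mp hSone
  obtain ⟨j1, j2, hjne, hTj⟩ := Finset.card_eq_two.mp hTtwo
  have hi0 : k i0 = 1 := by
    have : i0 ∈ S := by rw [hSi0]; exact Finset.mem_singleton_self i0
    exact (Finset.mem_filter.mp this).2
  have hj1m : 2 ≤ m j1 ∧ k j1 = 0 := by
    have : j1 ∈ T := by rw [hTj]; simp
    obtain ⟨-, h1, h2⟩ := Finset.mem_filter.mp this
    exact ⟨h2, by have := hk1 j1; omega⟩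
  have hj2m : 2 ≤ m j2 ∧ k j2 = 0 := by
    have : j2 ∈ T := by rw [hTj]; simp
    obtain ⟨-, h1, h2⟩ := Finset.mem_filter.mp this
    exact ⟨h2, by have := hk1 j2; omega⟩
  have hsumS : ∑ i ∈ S, t i = t i0 := by rw [hSi0, Finset.sum_singleton]
  have hsumT : ∑ i ∈ T, t i = t j1 + t j2 := by rw [hTj, Finset.sum_pair hjne]
  rw [hsumS, hsumT, htT j1 hj1m.2, htT j2 hj2m.2] at hST
  -- so 1/m j1 + 1/m j2 = t i0 ∈ (5/6, 1)
  have hkey : 1/(m j1 : ℝ) + 1/(m j2 : ℝ) = t i0 := by linarith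
  have hti0a : a ≤ t i0 := htS i0 hi0
  have hti0u : t i0 < 1 := htub i0
  have h56 : (5/6:ℝ) < 1/(m j1 : ℝ) + 1/(m j2 : ℝ) := by linarith
  have h1u : 1/(m j1 : ℝ) + 1/(m j2 : ℝ) < 1 := by linarith
  -- case analysis
  have hinv : ∀ j : Fin r, 3 ≤ m j → 1/(m j : ℝ) ≤ 1/3 := by
    intro j hj
    have : (3:ℝ) ≤ (m j : ℝ) := by exact_mod_cast hj
    apply one_div_le_one_div_of_le <;> linarith
  have hinv2 : ∀ j : Fin r, m j = 2 → 1/(m j : ℝ) = 1/2 := by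
    intro j hj; rw [hj]; norm_num
  rcases Nat.lt_or_ge (m j1) 3 with h1 | h1
  · have hm1 : m j1 = 2 := by omega
    rcases Nat.lt_or_ge (m j2) 3 with h2 | h2
    · have hm2 : m j2 = 2 := by omega
      rw [hinv2 j1 hm1, hinv2 j2 hm2] at h1u
      norm_num at h1u
    · have := hinv j2 h2
      rw [hinv2 j1 hm1] at h56
      linarith
  · rcases Nat.lt_or_ge (m j2) 3 with h2 | h2
    · have hm2 : m j2 = 2 := by omega
      have := hinv j1 h1
      rw [hinv2 j2 hm2] at h56
      linarith
    · have := hinv j1 h1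
      have := hinv j2 h2
      linarith
end
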